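/- Let n ≥ 1, d ≥ 1. There exists a constant c₅ > 0 depending only on n and d such that: for every normalized polynomial P of degree d in ℂⁿ with H = {z : P(z) = 0}, every v ∈ ℂⁿ with ‖v‖ ≤ 1 and dist(v, H) ≤ 1, and every complex affine line L = {v + t·w : t ∈ ℂ} through v (w a unit vector), one has |P(v)| ≥ c₅·‖P_L‖·dist(v, H)^d. -/

import Mathlib

noncomputable section

def unitCube (n : ℕ) : Set (EuclideanSpace ℂ (Fin n)) :=
  {z | ∀ i, (z i).re ∈ Set.Icc (0:ℝ) 1 ∧ (z i).im ∈ Set.Icc (0:ℝ) 1}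

def mvNorm {n : ℕ} (P : MvPolynomial (Fin n) ℂ) : ℝ :=
  ∑ α ∈ P.support, ‖P.coeff α‖

def zeroSet {n : ℕ} (P : MvPolynomial (Fin n) ℂ) : Set (EuclideanSpace ℂ (Fin n)) :=
  {z | MvPolynomial.eval (fun i => z i) P = 0}

def Qr (n : ℕ) (H : Set (EuclideanSpace ℂ (Fin n))) (r : ℝ) : Set (EuclideanSpace ℂ (Fin n)) :=
  unitCube n \ {z | Metric.infDist z H ≤ r}

def polyNorm (p : Polynomial ℂ) : ℝ := ∑ k ∈ p.support, ‖p.coeff k‖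

def lineRestrict {n : ℕ} (P : MvPolynomial (Fin n) ℂ) (b w : EuclideanSpace ℂ (Fin n)) :
    Polynomial ℂ :=
  MvPolynomial.aeval (fun i => Polynomial.C (b i) + Polynomial.C (w i) * Polynomial.X) P

def lineSet {n : ℕ} (b w : EuclideanSpace ℂ (Fin n)) : Set (EuclideanSpace ℂ (Fin n)) :=
  {z | ∃ t : ℂ, z = b + t • w}

open Polynomial

lemma polyNorm_eq_sum {p : ℂ[X]} {s : Finset ℕ} (h : p.support ⊆ s) :
    polyNorm p = ∑ k ∈ s, ‖p.coeff k‖ :=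
  Finset.sum_subset h (fun x _ hx => by
    simp [Polynomial.notMem_support_iff.mp hx])

lemma polyNorm_nonneg (p : ℂ[X]) : 0 ≤ polyNorm p :=
  Finset.sum_nonneg fun _ _ => norm_nonneg _

lemma polyNorm_mul_le (p q : ℂ[X]) : polyNorm (p * q) ≤ polyNorm p * polyNorm q := by
  set N := p.natDegree + q.natDegree + 1 with hN
  have hsub : (p * q).support ⊆ Finset.range N := by
    intro k hk
    have := Polynomial.le_natDegree_of_mem_supp k hk
    exact Finset.mem_range.2 (Nat.lt_succ_of_le (this.trans (Polynomial.natDegree_mul_le)))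
  rw [polyNorm_eq_sum hsub,
    polyNorm_eq_sum (Polynomial.supp_subset_range (show p.natDegree < N by omega)),
    polyNorm_eq_sum (Polynomial.supp_subset_range (show q.natDegree < N by omega))]
  calc ∑ k ∈ Finset.range N, ‖(p * q).coeff k‖
      ≤ ∑ k ∈ Finset.range N, ∑ ij ∈ Finset.HasAntidiagonal.antidiagonal k,
          ‖p.coeff ij.1‖ * ‖q.coeff ij.2‖ := by
        refine Finset.sum_le_sum fun k _ => ?_
        rw [Polynomial.coeff_mul]
        refine (norm_sum_le _ _).trans_eq ?_
        exact Finset.sum_congr rfl fun ij _ => norm_mul _ _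
    _ = ∑ ij ∈ (Finset.range N).biUnion Finset.HasAntidiagonal.antidiagonal,
          ‖p.coeff ij.1‖ * ‖q.coeff ij.2‖ := by
        refine (Finset.sum_biUnion ?_).symm
        intro a _ b _ hab
        simp only [Finset.disjoint_left]
        intro ij hia hib
        exact hab ((Finset.HasAntidiagonal.mem_antidiagonal.1 hia).symm.trans (Finset.HasAntidiagonal.mem_antidiagonal.1 hib))
    _ ≤ ∑ ij ∈ Finset.range N ×ˢ Finset.range N,
          ‖p.coeff ij.1‖ * ‖q.coeff ij.2‖ := by
        refine Finset.sum_le_sum_of_subset_of_nonneg ?_ (fun _ _ _ => by positivity)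
        intro ij hij
        obtain ⟨k, hk, hik⟩ := Finset.mem_biUnion.1 hij
        have hk' := Finset.mem_range.1 hk
        have := Finset.HasAntidiagonal.mem_antidiagonal.1 hik
        exact Finset.mem_product.2 ⟨Finset.mem_range.2 (by omega), Finset.mem_range.2 (by omega)⟩
    _ = (∑ k ∈ Finset.range N, ‖p.coeff k‖) *
          (∑ k ∈ Finset.range N, ‖q.coeff k‖) := by
        rw [Finset.sum_mul_sum, Finset.sum_product]

lemma polyNorm_C (a : ℂ) : polyNorm (C a) = ‖a‖ := by
  rw [polyNorm_eq_sum (s := {0}) (by intro k hk; simp_all [Polynomial.mem_support_iff,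
    Polynomial.coeff_C])]
  simp

lemma polyNorm_X_sub_C (a : ℂ) : polyNorm (X - C a) = 1 + ‖a‖ := by
  rw [polyNorm_eq_sum (s := Finset.range 2) (Polynomial.supp_subset_range
    (by rw [Polynomial.natDegree_X_sub_C]; omega))]
  simp [Finset.sum_range_succ, add_comm]

lemma polyNorm_one : polyNorm 1 = 1 := by simpa using polyNorm_C 1

lemma eval_lineRestrict {n : ℕ} (P : MvPolynomial (Fin n) ℂ)
    (v w : EuclideanSpace ℂ (Fin n)) (t : ℂ) :
    (lineRestrict P v w).eval t = MvPolynomial.eval (fun i => v i + w i * t) P := by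
  have h : (Polynomial.evalRingHom t).comp
      ((MvPolynomial.aeval (fun i => Polynomial.C (v i) + Polynomial.C (w i) * Polynomial.X) :
        MvPolynomial (Fin n) ℂ →ₐ[ℂ] ℂ[X]).toRingHom)
      = MvPolynomial.eval (fun i => v i + w i * t) := by
    apply MvPolynomial.ringHom_ext <;> intro x <;> simp
  exact RingHom.congr_fun h P

lemma natDegree_lineRestrict_le {n : ℕ} (P : MvPolynomial (Fin n) ℂ)
    (v w : EuclideanSpace ℂ (Fin n)) :
    (lineRestrict P v w).natDegree ≤ P.totalDegree := by
  unfold lineRestrict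
  rw [MvPolynomial.aeval_def, MvPolynomial.eval₂_eq]
  apply Polynomial.natDegree_sum_le_of_forall_le
  intro α hα
  refine Polynomial.natDegree_mul_le.trans ?_
  have h1 : (algebraMap ℂ ℂ[X] (MvPolynomial.coeff α P)).natDegree = 0 := by
    simp [Polynomial.natDegree_C]
  rw [h1, zero_add]
  refine (Polynomial.natDegree_prod_le _ _).trans ?_
  refine le_trans (Finset.sum_le_sum (g := fun i => α i) fun i _ => ?_) ?_
  · refine Polynomial.natDegree_pow_le.trans ?_
    have : (Polynomial.C (v i) + Polynomial.C (w i) * Polynomial.X).natDegree ≤ 1 := by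
      refine (Polynomial.natDegree_add_le _ _).trans ?_
      simp [Polynomial.natDegree_C_mul_le]
      exact (Polynomial.natDegree_C_mul_le _ _).trans (by simp)
    calc α i * (Polynomial.C (v i) + Polynomial.C (w i) * Polynomial.X).natDegree
        ≤ α i * 1 := Nat.mul_le_mul_left _ this
      _ = α i := Nat.mul_one _
  · have := MvPolynomial.le_totalDegree hα
    rwa [Finsupp.sum] at this

lemma prod_map_nonneg {α : Type*} (M : Multiset α) (f : α → ℝ)
    (h : ∀ a ∈ M, 0 ≤ f a) : 0 ≤ (M.map f).prod := by
  induction M using Multiset.induction with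
  | empty => simp
  | cons a s ih =>
      simp only [Multiset.map_cons, Multiset.prod_cons]
      exact mul_nonneg (h a (by simp)) (ih fun b hb => h b (by simp [hb]))

lemma prod_map_le {α : Type*} (M : Multiset α) (f g : α → ℝ)
    (h0 : ∀ a ∈ M, 0 ≤ f a) (h : ∀ a ∈ M, f a ≤ g a) :
    (M.map f).prod ≤ (M.map g).prod := by
  induction M using Multiset.induction with
  | empty => simp
  | cons a s ih =>
      simp only [Multiset.map_cons, Multiset.prod_cons]
      refine mul_le_mul (h a (by simp)) (ih (fun b hb => h0 b (by simp [hb]))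
        (fun b hb => h b (by simp [hb])))
        (prod_map_nonneg s f (fun b hb => h0 b (by simp [hb])))
        ((h0 a (by simp)).trans (h a (by simp)))

lemma polyNorm_prod_le (M : Multiset ℂ) :
    polyNorm ((M.map fun a => X - C a).prod) ≤ (M.map fun a => 1 + ‖a‖).prod := by
  induction M using Multiset.induction with
  | empty => simp [polyNorm_one]
  | cons a s ih =>
      simp only [Multiset.map_cons, Multiset.prod_cons]
      refine (polyNorm_mul_le _ _).trans ?_
      rw [polyNorm_X_sub_C]
      refine mul_le_mul_of_nonneg_left ih (by positivity)

lemma abs_multiset_prod (M : Multiset ℂ) :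
    ‖M.prod‖ = (M.map (‖·‖)).prod := by
  induction M using Multiset.induction with
  | empty => simp
  | cons a s ih => simp [map_mul, ih]

theorem stmt13 (n d : ℕ) (hn : 1 ≤ n) (hd : 1 ≤ d) :
    ∃ c₅ : ℝ, 0 < c₅ ∧
      ∀ P : MvPolynomial (Fin n) ℂ, P.totalDegree = d → mvNorm P = 1 →
        ∀ v : EuclideanSpace ℂ (Fin n), ‖v‖ ≤ 1 →
          Metric.infDist v (zeroSet P) ≤ 1 →
          ∀ w : EuclideanSpace ℂ (Fin n), ‖w‖ = 1 →
            c₅ * polyNorm (lineRestrict P v w) * Metric.infDist v (zeroSet P) ^ d ≤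
              ‖MvPolynomial.eval (fun i => v i) P‖ := by
  refine ⟨(1/2) ^ d, by positivity, ?_⟩
  intro P hdeg hnorm v hv hdist w hw
  set q := lineRestrict P v w with hq'
  set r := Metric.infDist v (zeroSet P) with hr'
  have hr0 : 0 ≤ r := Metric.infDist_nonneg
  by_cases hq : q = 0
  · rw [hq]
    have : polyNorm 0 = 0 := by simp [polyNorm]
    rw [this]
    simpa using norm_nonneg _
  -- factorization
  have hfac : q = C q.leadingCoeff * (q.roots.map fun a => X - C a).prod :=
    Splits.eq_prod_roots (IsAlgClosed.splits q)
  set M := q.roots with hM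
  -- each root has modulus ≥ r
  have hroot : ∀ a ∈ M, r ≤ ‖a‖ := by
    intro a ha
    have hev : q.eval a = 0 := (Polynomial.mem_roots hq).1 ha
    have h1 : MvPolynomial.eval (fun i => v i + w i * a) P = 0 := by
      rw [← eval_lineRestrict]; exact hev
    have hz : (v + a • w) ∈ zeroSet P := by
      show MvPolynomial.eval (fun i => (v + a • w) i) P = 0
      have : (fun i => (v + a • w) i) = fun i => v i + w i * a := by
        funext i
        simp [mul_comm]
      rw [this]; exact h1
    have h2 : r ≤ dist v (v + a • w) := Metric.infDist_le_dist_of_mem hz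
    have h3 : dist v (v + a • w) = ‖a‖ := by
      rw [dist_eq_norm]
      have : v - (v + a • w) = -(a • w) := by abel
      rw [this, norm_neg, norm_smul, hw, mul_one]
    rwa [h3] at h2
  set A := (M.map fun a => 1 + ‖a‖).prod with hA
  have hA0 : 0 ≤ A := prod_map_nonneg _ _ fun a _ => by positivity
  have hqA : polyNorm q ≤ ‖q.leadingCoeff‖ * A := by
    conv_lhs => rw [hfac]
    refine (polyNorm_mul_le _ _).trans ?_
    rw [polyNorm_C]
    exact mul_le_mul_of_nonneg_left (polyNorm_prod_le M) (norm_nonneg _)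
  have heval : ‖MvPolynomial.eval (fun i => v i) P‖
      = ‖q.leadingCoeff‖ * (M.map (‖·‖)).prod := by
    have h0 : MvPolynomial.eval (fun i => v i) P = q.eval 0 := by
      rw [eval_lineRestrict]; simp
    rw [h0]
    conv_lhs => rw [hfac]
    rw [Polynomial.eval_mul, Polynomial.eval_C, Polynomial.eval_multiset_prod,
      Multiset.map_map, norm_mul, abs_multiset_prod, Multiset.map_map]
    congr 1
    congr 1
    refine Multiset.map_congr rfl fun a _ => ?_
    simp [Function.comp]
  have hcard : Multiset.card M ≤ d := by
    refine (Polynomial.card_roots' q).trans ?_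
    rw [← hdeg]
    exact natDegree_lineRestrict_le P v w
  have hkey : (r / 2) ^ Multiset.card M * A ≤ (M.map (‖·‖)).prod := by
    have h1 : (M.map fun a => (r / 2) * (1 + ‖a‖)).prod
        ≤ (M.map (‖·‖)).prod := by
      refine prod_map_le _ _ _ (fun a _ => by positivity) ?_
      intro a ha
      have h2 := hroot a ha
      have h3 : ‖a‖ ≤ 1 * ‖a‖ := by ring_nf; exact le_rfl
      nlinarith [norm_nonneg a]
    refine le_trans (le_of_eq ?_) h1
    rw [Multiset.prod_map_mul]
    congr 1
    · rw [Multiset.map_const', Multiset.prod_replicate]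
  have hfinal : (1/2) ^ d * polyNorm q * r ^ d
      ≤ ‖q.leadingCoeff‖ * (M.map (‖·‖)).prod := by
    have e1 : (1/2 : ℝ) ^ d * polyNorm q * r ^ d = (r/2) ^ d * polyNorm q := by
      rw [div_pow, div_pow]; ring
    rw [e1]
    have e2 : (r/2 : ℝ) ^ d ≤ (r/2) ^ Multiset.card M := by
      refine pow_le_pow_of_le_one (by positivity) (by linarith) hcard
    calc (r/2) ^ d * polyNorm q ≤ (r/2) ^ Multiset.card M * polyNorm q :=
          mul_le_mul_of_nonneg_right e2 (polyNorm_nonneg q)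
      _ ≤ (r/2) ^ Multiset.card M * (‖q.leadingCoeff‖ * A) :=
          mul_le_mul_of_nonneg_left hqA (by positivity)
      _ = ‖q.leadingCoeff‖ * ((r/2) ^ Multiset.card M * A) := by ring
      _ ≤ ‖q.leadingCoeff‖ * (M.map (‖·‖)).prod :=
          mul_le_mul_of_nonneg_left hkey (norm_nonneg _)
  rw [heval]
  exact hfinal
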